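/- Let (t_{s,j}) be a solution of the system (dist)–(ne2), with the endpoints U_{s,j}, L_{s,j} defined by the stated recursion. Then for every state j ∈ {1,…,n} and indices s, k ∈ {1,…,d}: if t_{s,j} > 0 and t_{k,j} > 0, then U_{s,j} = U_{k,j}. -/

import Mathlib

/-- Probability of at least `m` successes in `l-1` Bernoulli(x) trials. -/
noncomputable def w (l m : ℕ) (x : ℝ) : ℝ :=
  ∑ i ∈ Finset.Icc m (l - 1), ((l - 1).choose i : ℝ) * x ^ i * (1 - x) ^ (l - 1 - i)

/-- `W x = 1 - w x`. -/
noncomputable def W (l m : ℕ) (x : ℝ) : ℝ := 1 - w l m x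

/-- `γ_{s,j} = ∑_{k=j}^n t_{s,k} q_k`. -/
noncomputable def gam (n : ℕ) (q : ℕ → ℝ) (t : ℕ → ℕ → ℝ) (s j : ℕ) : ℝ :=
  ∑ k ∈ Finset.Icc j n, t s k * q k

/-- `(t_{s,j})` is a solution of the system (dist)–(ne2). -/
def IsSolution (l m d n : ℕ) (M q : ℕ → ℝ) (t : ℕ → ℕ → ℝ) : Prop :=
  (∀ s ∈ Finset.Icc 1 d, ∀ j ∈ Finset.Icc 1 n, 0 ≤ t s j) ∧
  ∀ j ∈ Finset.Icc 1 n,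
    (∑ s ∈ Finset.Icc 1 d, t s j) = 1 ∧
    ∃ dj ∈ Finset.Icc 1 d,
      (∀ s ∈ Finset.Icc 1 d, s ≤ dj → 0 < t s j) ∧
      (∀ s ∈ Finset.Icc 1 d, dj < s → t s j = 0) ∧
      (∀ s ∈ Finset.Icc 1 dj,
        M s * W l m (gam n q t s j) = M 1 * W l m (gam n q t 1 j)) ∧
      (∀ s, dj ≤ s → s < d →
        M (s + 1) * W l m (gam n q t (s + 1) j) ≤ M s * W l m (gam n q t s j))

lemma my_telescope (g : ℕ → ℝ) (m N : ℕ) (h : m ≤ N) :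
    ∑ i ∈ Finset.Icc m N, (g i - g (i + 1)) = g m - g (N + 1) := by
  induction N, h using Nat.le_induction with
  | base => simp
  | succ N hN ih =>
    rw [Finset.sum_Icc_succ_top (by omega), ih]; ring

lemma my_nat_id1 (N i : ℕ) (hN : 1 ≤ N) (hi : 1 ≤ i) :
    N.choose i * i = N * (N - 1).choose (i - 1) := by
  cases N with
  | zero => omega
  | succ N' =>
    cases i with
    | zero => omega
    | succ i' => simpa [mul_comm] using (Nat.add_one_mul_choose_eq N' i').symm

lemma my_nat_id2 (N i : ℕ) (hN : 1 ≤ N) :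
    N.choose i * (N - i) = N * (N - 1).choose i := by
  cases N with
  | zero => omega
  | succ N' =>
    rw [← Nat.choose_succ_right_eq]
    simpa [mul_comm] using (Nat.add_one_mul_choose_eq N' i).symm

noncomputable def gfun (N : ℕ) (x : ℝ) : ℕ → ℝ :=
  fun i => (N : ℝ) * (((N - 1).choose (i - 1) : ℕ) : ℝ) * x ^ (i - 1) * (1 - x) ^ (N - i)

lemma w_hasDerivAt (l m : ℕ) (hm : 1 ≤ m) (hml : m ≤ l - 1) (x : ℝ) :
    HasDerivAt (w l m)
      (((l - 1 : ℕ) : ℝ) * (((l - 1 - 1).choose (m - 1) : ℕ) : ℝ) * x ^ (m - 1) * (1 - x) ^ (l - 1 - m)) x := by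
  have hN1 : 1 ≤ l - 1 := le_trans hm hml
  have key : ∀ i ∈ Finset.Icc m (l - 1),
      HasDerivAt (fun x : ℝ => (((l - 1).choose i : ℕ) : ℝ) * x ^ i * (1 - x) ^ (l - 1 - i))
        (gfun (l - 1) x i - gfun (l - 1) x (i + 1)) x := by
    intro i hi
    rw [Finset.mem_Icc] at hi
    have hi1 : 1 ≤ i := le_trans hm hi.1
    have hiN : i ≤ l - 1 := hi.2
    have h1 : HasDerivAt (fun x : ℝ => x ^ i) ((i : ℝ) * x ^ (i - 1)) x := hasDerivAt_pow i x
    have h2 : HasDerivAt (fun x : ℝ => (1 - x) ^ (l - 1 - i))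
        (((l - 1 - i : ℕ) : ℝ) * (1 - x) ^ (l - 1 - i - 1) * (-1)) x :=
      ((hasDerivAt_id x).const_sub 1).pow (l - 1 - i)
    have h3 := (h1.fun_mul h2).const_mul (((l - 1).choose i : ℕ) : ℝ)
    have id1 : (((l - 1).choose i : ℕ) : ℝ) * i = ((l - 1 : ℕ) : ℝ) * ((l - 1 - 1).choose (i - 1) : ℕ) := by
      exact_mod_cast congrArg (Nat.cast (R := ℝ)) (my_nat_id1 (l - 1) i hN1 hi1)
    have id2 : (((l - 1).choose i : ℕ) : ℝ) * ((l - 1 - i : ℕ) : ℝ)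
        = ((l - 1 : ℕ) : ℝ) * ((l - 1 - 1).choose i : ℕ) := by
      exact_mod_cast congrArg (Nat.cast (R := ℝ)) (my_nat_id2 (l - 1) i hN1)
    simp only [← mul_assoc] at h3
    refine h3.congr_deriv (Eq.symm ?_)
    have e1 : l - 1 - (i + 1) = l - 1 - i - 1 := by omega
    have e2 : i + 1 - 1 = i := by omega
    simp only [gfun, e1, e2]
    linear_combination (x ^ i * (1 - x) ^ (l - 1 - i - 1)) * id2
      - (x ^ (i - 1) * (1 - x) ^ (l - 1 - i)) * id1
  have hsum := HasDerivAt.fun_sum key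
  rw [my_telescope (gfun (l - 1) x) m (l - 1) hml] at hsum
  have hgN : gfun (l - 1) x (l - 1 + 1) = 0 := by
    have h0 : (l - 1 - 1).choose (l - 1) = 0 := Nat.choose_eq_zero_of_lt (by omega)
    simp [gfun, h0]
  rw [hgN, sub_zero] at hsum
  have hgm : gfun (l - 1) x m
      = ((l - 1 : ℕ) : ℝ) * (((l - 1 - 1).choose (m - 1) : ℕ) : ℝ) * x ^ (m - 1) * (1 - x) ^ (l - 1 - m) := rfl
  rw [hgm] at hsum
  exact hsum

lemma w_strictMonoOn (l m : ℕ) (hm : 1 ≤ m) (hml : m ≤ l - 1) :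
    StrictMonoOn (w l m) (Set.Icc (0 : ℝ) 1) := by
  apply strictMonoOn_of_deriv_pos (convex_Icc 0 1)
  · apply Continuous.continuousOn
    unfold w
    exact continuous_finset_sum _ fun i _ => (by fun_prop : Continuous fun x : ℝ => ((l - 1).choose i : ℝ) * x ^ i * (1 - x) ^ (l - 1 - i))
  · intro x hx
    rw [interior_Icc] at hx
    rw [(w_hasDerivAt l m hm hml x).deriv]
    have h1 : (0 : ℝ) < ((l - 1 : ℕ) : ℝ) := by
      exact_mod_cast Nat.pos_of_ne_zero (by omega)
    have h2 : (0 : ℝ) < (((l - 1 - 1).choose (m - 1) : ℕ) : ℝ) := by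
      exact_mod_cast Nat.choose_pos (by omega)
    have h3 : (0 : ℝ) < x := hx.1
    have h4 : (0 : ℝ) < 1 - x := by linarith [hx.2]
    positivity

lemma w_one (l m : ℕ) (hm : 1 ≤ m) (hml : m ≤ l - 1) : w l m 1 = 1 := by
  unfold w
  rw [Finset.sum_eq_single (l - 1)]
  · simp
  · intro i hi hne
    rw [Finset.mem_Icc] at hi
    have : l - 1 - i ≠ 0 := by omega
    simp [zero_pow this]
  · intro h
    exact absurd (Finset.mem_Icc.mpr ⟨hml, le_refl _⟩) h

lemma W_pos (l m : ℕ) (hm : 1 ≤ m) (hml : m ≤ l - 1) {x : ℝ} (h0 : 0 ≤ x) (h1 : x < 1) :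
    0 < W l m x := by
  have := w_strictMonoOn l m hm hml (Set.mem_Icc.mpr ⟨h0, h1.le⟩)
    (Set.mem_Icc.mpr ⟨zero_le_one, le_refl 1⟩) h1
  rw [w_one l m hm hml] at this
  simp only [W]; linarith

lemma W_strict_anti (l m : ℕ) (hm : 1 ≤ m) (hml : m ≤ l - 1) {x y : ℝ}
    (h0 : 0 ≤ x) (hxy : x < y) (h1 : y < 1) : W l m y < W l m x := by
  have := w_strictMonoOn l m hm hml (Set.mem_Icc.mpr ⟨h0, by linarith⟩)
    (Set.mem_Icc.mpr ⟨by linarith, h1.le⟩) hxy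
  simp only [W]; linarith

lemma gam_step (n : ℕ) (q : ℕ → ℝ) (t : ℕ → ℕ → ℝ) (s j : ℕ) (hjn : j ≤ n) :
    gam n q t s j = t s j * q j + gam n q t s (j + 1) := by
  unfold gam
  rw [show Finset.Icc j n = insert j (Finset.Icc (j + 1) n) from by
    ext a; simp [Finset.mem_Icc]; omega, Finset.sum_insert (by simp)]

theorem stmt11 (l m d n : ℕ) (hm : 1 ≤ m) (hml : m ≤ l - 1) (hd : 2 ≤ d) (hn : 1 ≤ n)
    (M q : ℕ → ℝ)
    (hM : ∀ s ∈ Finset.Icc 1 d, ∀ r ∈ Finset.Icc 1 d, s ≤ r → M r ≤ M s)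
    (hMpos : ∀ s ∈ Finset.Icc 1 d, 0 < M s)
    (hq : ∀ j ∈ Finset.Icc 1 n, 0 < q j)
    (hqsum : ∑ j ∈ Finset.Icc 1 n, q j < 1)
    (c v : ℝ) (f : ℕ → ℝ → ℝ)
    (hfc : ∀ j ∈ Finset.Icc 1 n, Continuous (f j))
    (hfm : ∀ j ∈ Finset.Icc 1 n, StrictMono (f j))
    (hfb : ∀ j ∈ Finset.Icc 1 n, Function.Bijective (f j))
    (hford : ∀ i ∈ Finset.Icc 1 n, ∀ j ∈ Finset.Icc 1 n, i < j → ∀ x : ℝ, f i x < f j x)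
    (hfv : c < f 1 v)
    (hassum : ∀ i ∈ Finset.Icc 1 n, ∀ j ∈ Finset.Icc 1 n, i < j →
      ∀ x y : ℝ, y < x → c < f i y →
        (f i y - c) / (f j y - c) < (f i x - c) / (f j x - c))
    (t : ℕ → ℕ → ℝ) (hsol : IsSolution l m d n M q t)
    (U L : ℕ → ℕ → ℝ)
    (hU1 : ∀ s ∈ Finset.Icc 1 d, U s 1 = v)
    (hrecL : ∀ s ∈ Finset.Icc 1 d, ∀ j ∈ Finset.Icc 1 n,
      (f j (L s j) - c) * W l m (gam n q t s (j + 1)) =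
        (f j (U s j) - c) * W l m (gam n q t s j))
    (hrecU : ∀ s ∈ Finset.Icc 1 d, ∀ j ∈ Finset.Icc 1 n, U s (j + 1) = L s j)
    (j : ℕ) (hj : j ∈ Finset.Icc 1 n)
    (s k : ℕ) (hs : s ∈ Finset.Icc 1 d) (hk : k ∈ Finset.Icc 1 d)
    (hts : 0 < t s j) (htk : 0 < t k j) :
    U s j = U k j := by
  obtain ⟨ht0, hsys⟩ := hsol
  rw [Finset.mem_Icc] at hj
  -- bounds for gam
  have hgam0 : ∀ s ∈ Finset.Icc 1 d, ∀ j, 1 ≤ j → 0 ≤ gam n q t s j := by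
    intro s hs j hj1
    apply Finset.sum_nonneg
    intro a ha
    rw [Finset.mem_Icc] at ha
    have ha' : a ∈ Finset.Icc 1 n := Finset.mem_Icc.mpr ⟨le_trans hj1 ha.1, ha.2⟩
    exact mul_nonneg (ht0 s hs a ha') (hq a ha').le
  have hgam1 : ∀ s ∈ Finset.Icc 1 d, ∀ j, 1 ≤ j → gam n q t s j < 1 := by
    intro s hs j hj1
    have hle : gam n q t s j ≤ ∑ a ∈ Finset.Icc j n, q a := by
      apply Finset.sum_le_sum
      intro a ha
      rw [Finset.mem_Icc] at ha
      have ha' : a ∈ Finset.Icc 1 n := Finset.mem_Icc.mpr ⟨le_trans hj1 ha.1, ha.2⟩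
      have hts1 : t s a ≤ 1 := by
        rw [← (hsys a ha').1]
        exact Finset.single_le_sum (fun r hr => ht0 r hr a ha') hs
      nlinarith [hq a ha', ht0 s hs a ha']
    have hsub : ∑ a ∈ Finset.Icc j n, q a ≤ ∑ a ∈ Finset.Icc 1 n, q a := by
      apply Finset.sum_le_sum_of_subset_of_nonneg
      · intro a ha; rw [Finset.mem_Icc] at ha ⊢; omega
      · intro a ha _; exact (hq a ha).le
    linarith
  have hW : ∀ s ∈ Finset.Icc 1 d, ∀ j, 1 ≤ j → 0 < W l m (gam n q t s j) :=
    fun s hs j hj1 => W_pos l m hm hml (hgam0 s hs j hj1) (hgam1 s hs j hj1)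
  -- chain inequality
  have chain : ∀ j ∈ Finset.Icc 1 n, ∀ dj,
      (∀ r, dj ≤ r → r < d →
        M (r + 1) * W l m (gam n q t (r + 1) j) ≤ M r * W l m (gam n q t r j)) →
      ∀ r, dj ≤ r → r ≤ d →
        M r * W l m (gam n q t r j) ≤ M dj * W l m (gam n q t dj j) := by
    intro j hj dj hstep r hr
    induction r, hr using Nat.le_induction with
    | base => intro _; exact le_refl _
    | succ r hr ih =>
      intro hrd
      exact le_trans (hstep r hr (by omega)) (ih (by omega))
  -- activity monotonicity
  have active_mono : ∀ j, 1 ≤ j → j + 1 ≤ n → ∀ s ∈ Finset.Icc 1 d,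
      0 < t s (j + 1) → 0 < t s j := by
    intro j hj1 hjn s hs hpos
    have hjmem : j ∈ Finset.Icc 1 n := Finset.mem_Icc.mpr ⟨hj1, by omega⟩
    have hjmem' : (j + 1) ∈ Finset.Icc 1 n := Finset.mem_Icc.mpr ⟨by omega, hjn⟩
    obtain ⟨-, dj, hdjmem, hposle, hzerogt, heq, hineq⟩ := hsys j hjmem
    obtain ⟨-, dj', hdjmem', hposle', hzerogt', heq', hineq'⟩ := hsys (j + 1) hjmem'
    rw [Finset.mem_Icc] at hdjmem hdjmem'
    have h1d : (1 : ℕ) ∈ Finset.Icc 1 d := Finset.mem_Icc.mpr ⟨le_refl 1, by omega⟩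
    by_contra hno
    have hts0 : t s j = 0 := le_antisymm (le_of_not_gt hno) (ht0 s hs j hjmem)
    have hsdj : dj < s := by
      by_contra h
      exact hno (hposle s hs (le_of_not_gt h))
    have hsdj' : s ≤ dj' := by
      by_contra h
      exact absurd (hzerogt' s hs (lt_of_not_ge h)) (by positivity)
    -- gamma equal across stage j for arm s
    have hgeq : gam n q t s j = gam n q t s (j + 1) := by
      rw [gam_step n q t s j (by omega), hts0]; ring
    -- gamma of arm 1 strictly increases
    have ht1j : 0 < t 1 j := hposle 1 h1d hdjmem.1
    have ht1j' : 0 < t 1 (j + 1) := hposle' 1 h1d hdjmem'.1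
    have hg1lt : gam n q t 1 (j + 1) < gam n q t 1 j := by
      rw [gam_step n q t 1 j (by omega)]
      have := hq j hjmem
      nlinarith
    have hWlt : W l m (gam n q t 1 j) < W l m (gam n q t 1 (j + 1)) :=
      W_strict_anti l m hm hml (hgam0 1 h1d (j + 1) (by omega)) hg1lt (hgam1 1 h1d j hj1)
    -- chain: M s W(γ_{s,j}) ≤ M dj W(γ_{dj,j}) = M 1 W(γ_{1,j})
    have hch : M s * W l m (gam n q t s j) ≤ M dj * W l m (gam n q t dj j) :=
      chain j hjmem dj hineq s hsdj.le (Finset.mem_Icc.mp hs).2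
    have hdjeq : M dj * W l m (gam n q t dj j) = M 1 * W l m (gam n q t 1 j) :=
      heq dj (Finset.mem_Icc.mpr ⟨hdjmem.1, le_refl dj⟩)
    have hseq' : M s * W l m (gam n q t s (j + 1)) = M 1 * W l m (gam n q t 1 (j + 1)) :=
      heq' s (Finset.mem_Icc.mpr ⟨(Finset.mem_Icc.mp hs).1, hsdj'⟩)
    have hM1 : 0 < M 1 := hMpos 1 h1d
    rw [hgeq] at hch
    nlinarith
  -- main induction
  have main : ∀ j, 1 ≤ j → j ≤ n → ∀ s ∈ Finset.Icc 1 d, ∀ k ∈ Finset.Icc 1 d,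
      0 < t s j → 0 < t k j → U s j = U k j := by
    intro j hj1
    induction j, hj1 using Nat.le_induction with
    | base =>
      intro _ s hs k hk _ _
      rw [hU1 s hs, hU1 k hk]
    | succ j hj1 ih =>
      intro hjn s hs k hk hts htk
      have hjn' : j ≤ n := by omega
      have hjmem : j ∈ Finset.Icc 1 n := Finset.mem_Icc.mpr ⟨hj1, hjn'⟩
      have hjmem' : (j + 1) ∈ Finset.Icc 1 n := Finset.mem_Icc.mpr ⟨by omega, hjn⟩
      have hts' : 0 < t s j := active_mono j hj1 hjn s hs hts
      have htk' : 0 < t k j := active_mono j hj1 hjn k hk htk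
      have hUU : U s j = U k j := ih hjn' s hs k hk hts' htk'
      rw [hrecU s hs j hjmem, hrecU k hk j hjmem]
      obtain ⟨-, dj, hdjmem, hposle, hzerogt, heq, -⟩ := hsys j hjmem
      obtain ⟨-, dj', hdjmem', hposle', hzerogt', heq', -⟩ := hsys (j + 1) hjmem'
      rw [Finset.mem_Icc] at hdjmem hdjmem'
      have h1d : (1 : ℕ) ∈ Finset.Icc 1 d := Finset.mem_Icc.mpr ⟨le_refl 1, by omega⟩
      have hM1 : 0 < M 1 := hMpos 1 h1d
      have hact : ∀ r ∈ Finset.Icc 1 d, 0 < t r j → 0 < t r (j + 1) →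
          (f j (L r j) - c) * W l m (gam n q t 1 (j + 1)) =
          (f j (U r j) - c) * W l m (gam n q t 1 j) := by
        intro r hr hrj hrj'
        have hrdj : r ≤ dj := by
          by_contra h
          exact absurd (hzerogt r hr (lt_of_not_ge h)) (by positivity)
        have hrdj' : r ≤ dj' := by
          by_contra h
          exact absurd (hzerogt' r hr (lt_of_not_ge h)) (by positivity)
        have E1 : M r * W l m (gam n q t r j) = M 1 * W l m (gam n q t 1 j) :=
          heq r (Finset.mem_Icc.mpr ⟨(Finset.mem_Icc.mp hr).1, hrdj⟩)
        have E2 : M r * W l m (gam n q t r (j + 1)) = M 1 * W l m (gam n q t 1 (j + 1)) :=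
          heq' r (Finset.mem_Icc.mpr ⟨(Finset.mem_Icc.mp hr).1, hrdj'⟩)
        have hrec := hrecL r hr j hjmem
        apply mul_left_cancel₀ (ne_of_gt hM1)
        calc M 1 * ((f j (L r j) - c) * W l m (gam n q t 1 (j + 1)))
            = (f j (L r j) - c) * (M 1 * W l m (gam n q t 1 (j + 1))) := by ring
          _ = (f j (L r j) - c) * (M r * W l m (gam n q t r (j + 1))) := by rw [E2]
          _ = M r * ((f j (L r j) - c) * W l m (gam n q t r (j + 1))) := by ring
          _ = M r * ((f j (U r j) - c) * W l m (gam n q t r j)) := by rw [hrec]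
          _ = (f j (U r j) - c) * (M r * W l m (gam n q t r j)) := by ring
          _ = (f j (U r j) - c) * (M 1 * W l m (gam n q t 1 j)) := by rw [E1]
          _ = M 1 * ((f j (U r j) - c) * W l m (gam n q t 1 j)) := by ring
      have hS := hact s hs hts' hts
      have hK := hact k hk htk' htk
      rw [hUU] at hS
      have hW1' : 0 < W l m (gam n q t 1 (j + 1)) := hW 1 h1d (j + 1) (by omega)
      have hfL : f j (L s j) = f j (L k j) := by
        have := hS.trans hK.symm
        have h2 := mul_right_cancel₀ (ne_of_gt hW1') this
        linarith
      exact (hfm j hjmem).injective hfL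
  exact main j hj.1 hj.2 s hs k hk hts htk
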